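/- (Lemma 2) Let β ∈ ℝ, X > 2, and h ∈ ℕ with 2 < h, and let N+1 be the number of binary digits of h (so 2^N ≤ h < 2^{N+1}). Set X_{N+1} = X·2^{-(N+1)} and β_{N+1} = 2^{N+1} β. Then |S(X,h,β)| ≪ h^{log₂3} |S(X_{N+1}, 1, β_{N+1})| + h^{log₂3} |S(X_{N+1}, 2, β_{N+1})| + h^{log₂3}, with an absolute implied constant, where S(Y,h,β) = ∑_{1 ≤ n ≤ Y} ε(n) ε(n+h) e(βn). -/

import Mathlib

open Complex Finset

/-- `e(x) = exp(2πix)`. -/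
noncomputable def e (x : ℝ) : ℂ := Complex.exp (2 * Real.pi * Complex.I * x)

/-- `ε(n) = (-1)^(s₂ n)` where `s₂` is the binary digit sum. -/
def eps (n : ℕ) : ℤ := (-1) ^ ((Nat.digits 2 n).sum)

/-- `S(Y,h,β) = ∑_{1 ≤ n ≤ Y} ε(n) ε(n+h) e(βn)`. -/
noncomputable def S (Y : ℝ) (h : ℕ) (β : ℝ) : ℂ :=
  ∑ n ∈ Finset.Icc 1 ⌊Y⌋₊, (eps n : ℂ) * (eps (n + h) : ℂ) * e (β * n)


lemma e_add (x y : ℝ) : e (x + y) = e x * e y := by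
  unfold e; rw [← Complex.exp_add]; congr 1; push_cast; ring

lemma abs_e (x : ℝ) : norm (e x) = 1 := by
  unfold e
  rw [Complex.norm_exp]
  have : (2 * (Real.pi:ℂ) * Complex.I * (x:ℝ)).re = 0 := by simp
  rw [this, Real.exp_zero]

lemma eps_mul_self (n : ℕ) : (eps n : ℂ) * (eps n : ℂ) = 1 := by
  unfold eps
  push_cast
  rw [← pow_add]
  have : (Nat.digits 2 n).sum + (Nat.digits 2 n).sum = 2 * (Nat.digits 2 n).sum := by ring
  rw [this, pow_mul]
  norm_num

lemma eps_two_mul (m : ℕ) : eps (2 * m) = eps m := by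
  rcases Nat.eq_zero_or_pos m with rfl | hm
  · rfl
  · unfold eps
    rw [Nat.digits_def' (by norm_num : 1 < 2) (by omega : 0 < 2 * m)]
    simp [Nat.mul_div_cancel_left m, Nat.mul_mod_right]

lemma eps_two_mul_add_one (m : ℕ) : eps (2 * m + 1) = -eps m := by
  unfold eps
  rw [Nat.digits_def' (by norm_num : 1 < 2) (by omega : 0 < 2 * m + 1)]
  have h1 : (2 * m + 1) % 2 = 1 := by omega
  have h2 : (2 * m + 1) / 2 = m := by omega
  rw [h1, h2]
  simp [pow_succ, List.sum_cons]
  ring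

lemma abs_eps (n : ℕ) : norm ((eps n : ℂ)) = 1 := by
  unfold eps; push_cast; rw [norm_pow]; simp

lemma sum_split (f : ℕ → ℂ) (M : ℕ) :
    ∑ n ∈ Icc 1 M, f n
      = ∑ m ∈ Icc 1 (M / 2), f (2 * m) + ∑ m ∈ range ((M + 1) / 2), f (2 * m + 1) := by
  induction M with
  | zero => simp
  | succ M ih =>
    rw [Finset.sum_Icc_succ_top (by omega : 1 ≤ M + 1), ih]
    rcases Nat.even_or_odd M with ⟨a, ha⟩ | ⟨a, ha⟩
    · have h2 : (M + 1 + 1) / 2 = (M + 1) / 2 + 1 := by omega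
      have h1 : (M + 1) / 2 = M / 2 := by omega
      rw [h2, h1, Finset.sum_range_succ]
      have h3 : 2 * (M / 2) + 1 = M + 1 := by omega
      rw [h3]; ring
    · have h2 : (M + 1 + 1) / 2 = (M + 1) / 2 := by omega
      have h4 : (M + 1) / 2 = M / 2 + 1 := by omega
      rw [h2, h4, Finset.sum_Icc_succ_top (by omega : 1 ≤ M / 2 + 1)]
      have h3 : 2 * (M / 2 + 1) = M + 1 := by omega
      rw [h3]; ring

lemma range_succ_eq_insert (A : ℕ) : range (A + 1) = insert 0 (Icc 1 A) := by
  ext x; simp [Finset.mem_range, Finset.mem_Icc]; omega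

lemma bdry' (g : ℕ → ℂ) (hg : ∀ n, norm (g n) ≤ 1) (A B : ℕ) (h : B = A ∨ B = A + 1) :
    norm ((∑ m ∈ range B, g m) - ∑ m ∈ Icc 1 A, g m) ≤ 2 := by
  have key : ∀ A : ℕ, ∑ m ∈ range (A + 1), g m = g 0 + ∑ m ∈ Icc 1 A, g m := by
    intro A
    rw [range_succ_eq_insert, Finset.sum_insert (by simp)]
  rcases h with h | h <;> rw [h]
  · rcases Nat.eq_zero_or_pos A with rfl | h0
    · simp
    · obtain ⟨a, rfl⟩ : ∃ a, A = a + 1 := ⟨A - 1, by omega⟩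
      rw [key, Finset.sum_Icc_succ_top (by omega : 1 ≤ a + 1)]
      have e1 : g 0 + ∑ m ∈ Icc 1 a, g m - (∑ m ∈ Icc 1 a, g m + g (a + 1))
          = g 0 - g (a + 1) := by ring
      rw [e1, sub_eq_add_neg]
      calc norm (g 0 + -g (a + 1)) ≤ norm (g 0) + norm (-g (a + 1)) :=
            norm_add_le _ _
        _ ≤ 1 + 1 := by rw [norm_neg]; exact add_le_add (hg 0) (hg (a + 1))
        _ = 2 := by norm_num
  · rw [key]
    have e1 : g 0 + ∑ m ∈ Icc 1 A, g m - ∑ m ∈ Icc 1 A, g m = g 0 := by ring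
    rw [e1]
    calc norm (g 0) ≤ 1 := hg 0
      _ ≤ 2 := by norm_num

lemma bdry (g : ℕ → ℂ) (hg : ∀ n, norm (g n) ≤ 1) (M : ℕ) :
    norm ((∑ m ∈ range ((M + 1) / 2), g m) - ∑ m ∈ Icc 1 (M / 2), g m) ≤ 2 :=
  bdry' g hg _ _ (by omega)

lemma sum_range_two_mul (F : ℕ → ℂ) (hF : ∀ m, F (2 * m) + F (2 * m + 1) = 0) (a : ℕ) :
    ∑ n ∈ range (2 * a), F n = 0 := by
  induction a with
  | zero => simp
  | succ a ih =>
    have h : 2 * (a + 1) = 2 * a + 1 + 1 := by ring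
    rw [h, Finset.sum_range_succ, Finset.sum_range_succ, ih]
    linear_combination hF a

lemma floor_half (Y : ℝ) : ⌊Y / 2⌋₊ = ⌊Y⌋₊ / 2 := by
  have := Nat.floor_div_natCast Y 2
  norm_num at this
  exact this

lemma abs_term (a b : ℕ) (x : ℝ) : norm ((eps a : ℂ) * (eps b : ℂ) * e x) ≤ 1 := by
  rw [norm_mul, norm_mul, abs_eps, abs_eps, abs_e]; norm_num

lemma range_le (g : ℕ → ℂ) (hg : ∀ n, norm (g n) ≤ 1) (M : ℕ) :
    norm (∑ m ∈ range ((M + 1) / 2), g m)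
      ≤ norm (∑ m ∈ Icc 1 (M / 2), g m) + 2 := by
  have h := bdry g hg M
  calc norm (∑ m ∈ range ((M + 1) / 2), g m)
      = norm ((∑ m ∈ range ((M + 1) / 2), g m - ∑ m ∈ Icc 1 (M / 2), g m)
          + ∑ m ∈ Icc 1 (M / 2), g m) := by ring_nf
    _ ≤ norm (∑ m ∈ range ((M + 1) / 2), g m - ∑ m ∈ Icc 1 (M / 2), g m)
          + norm (∑ m ∈ Icc 1 (M / 2), g m) := norm_add_le _ _
    _ ≤ norm (∑ m ∈ Icc 1 (M / 2), g m) + 2 := by linarith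

lemma L_even (Y γ : ℝ) (k : ℕ) :
    norm (S Y (2 * k) γ) ≤ 2 * norm (S (Y / 2) k (2 * γ)) + 2 := by
  set M := ⌊Y⌋₊ with hM
  set g : ℕ → ℂ := fun m => (eps m : ℂ) * (eps (m + k) : ℂ) * e (2 * γ * m) with hg
  have hg1 : ∀ n, norm (g n) ≤ 1 := fun n => abs_term _ _ _
  have hS' : S (Y / 2) k (2 * γ) = ∑ m ∈ Icc 1 (M / 2), g m := by
    rw [S, floor_half]
  have hsplit : S Y (2 * k) γ
      = (∑ m ∈ Icc 1 (M / 2), g m) + e γ * ∑ m ∈ range ((M + 1) / 2), g m := by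
    rw [S, sum_split]
    congr 1
    · apply Finset.sum_congr rfl; intro m _
      have h1 : 2 * m + 2 * k = 2 * (m + k) := by ring
      rw [h1, eps_two_mul, eps_two_mul]
      have h2 : γ * ((2 * m : ℕ) : ℝ) = 2 * γ * m := by push_cast; ring
      rw [h2]
    · rw [Finset.mul_sum]; apply Finset.sum_congr rfl; intro m _
      have h1 : 2 * m + 1 + 2 * k = 2 * (m + k) + 1 := by ring
      rw [h1, eps_two_mul_add_one, eps_two_mul_add_one]
      have h2 : γ * ((2 * m + 1 : ℕ) : ℝ) = 2 * γ * m + γ := by push_cast; ring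
      rw [h2, e_add]
      push_cast
      ring
  rw [hsplit, hS']
  calc norm ((∑ m ∈ Icc 1 (M / 2), g m) + e γ * ∑ m ∈ range ((M + 1) / 2), g m)
      ≤ norm (∑ m ∈ Icc 1 (M / 2), g m)
        + norm (e γ * ∑ m ∈ range ((M + 1) / 2), g m) := norm_add_le _ _
    _ = norm (∑ m ∈ Icc 1 (M / 2), g m)
        + norm (∑ m ∈ range ((M + 1) / 2), g m) := by rw [norm_mul, abs_e, one_mul]
    _ ≤ norm (∑ m ∈ Icc 1 (M / 2), g m)
        + (norm (∑ m ∈ Icc 1 (M / 2), g m) + 2) := by linarith [range_le g hg1 M]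
    _ = 2 * norm (∑ m ∈ Icc 1 (M / 2), g m) + 2 := by ring

lemma L_odd (Y γ : ℝ) (k : ℕ) :
    norm (S Y (2 * k + 1) γ)
      ≤ norm (S (Y / 2) k (2 * γ)) + norm (S (Y / 2) (k + 1) (2 * γ)) + 2 := by
  set M := ⌊Y⌋₊ with hM
  set g : ℕ → ℂ := fun m => (eps m : ℂ) * (eps (m + k) : ℂ) * e (2 * γ * m) with hgdef
  set g' : ℕ → ℂ := fun m => (eps m : ℂ) * (eps (m + (k + 1)) : ℂ) * e (2 * γ * m) with hg'def
  have hg1 : ∀ n, norm (g' n) ≤ 1 := fun n => abs_term _ _ _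
  have hS : S (Y / 2) k (2 * γ) = ∑ m ∈ Icc 1 (M / 2), g m := by rw [S, floor_half]
  have hS' : S (Y / 2) (k + 1) (2 * γ) = ∑ m ∈ Icc 1 (M / 2), g' m := by rw [S, floor_half]
  have hsplit : S Y (2 * k + 1) γ
      = -(∑ m ∈ Icc 1 (M / 2), g m) + (-(e γ)) * ∑ m ∈ range ((M + 1) / 2), g' m := by
    rw [S, sum_split]
    congr 1
    · rw [← Finset.sum_neg_distrib]
      apply Finset.sum_congr rfl; intro m _
      have h1 : 2 * m + (2 * k + 1) = 2 * (m + k) + 1 := by ring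
      rw [h1, eps_two_mul, eps_two_mul_add_one]
      have h2 : γ * ((2 * m : ℕ) : ℝ) = 2 * γ * m := by push_cast; ring
      rw [h2]
      push_cast; ring
    · rw [Finset.mul_sum]; apply Finset.sum_congr rfl; intro m _
      have h1 : 2 * m + 1 + (2 * k + 1) = 2 * (m + (k + 1)) := by ring
      rw [h1, eps_two_mul, eps_two_mul_add_one]
      have h2 : γ * ((2 * m + 1 : ℕ) : ℝ) = 2 * γ * m + γ := by push_cast; ring
      rw [h2, e_add]
      push_cast; ring
  rw [hsplit, hS, hS']
  calc norm (-(∑ m ∈ Icc 1 (M / 2), g m) + (-(e γ)) * ∑ m ∈ range ((M + 1) / 2), g' m)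
      ≤ norm (-(∑ m ∈ Icc 1 (M / 2), g m))
        + norm ((-(e γ)) * ∑ m ∈ range ((M + 1) / 2), g' m) := norm_add_le _ _
    _ = norm (∑ m ∈ Icc 1 (M / 2), g m)
        + norm (∑ m ∈ range ((M + 1) / 2), g' m) := by
          rw [norm_mul, norm_neg, norm_neg, abs_e, one_mul]
    _ ≤ norm (∑ m ∈ Icc 1 (M / 2), g m)
        + (norm (∑ m ∈ Icc 1 (M / 2), g' m) + 2) := by linarith [range_le g' hg1 M]
    _ = norm (∑ m ∈ Icc 1 (M / 2), g m)
        + norm (∑ m ∈ Icc 1 (M / 2), g' m) + 2 := by ring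

lemma S_zero (Z δ : ℝ) : S Z 0 δ = ∑ n ∈ Icc 1 ⌊Z⌋₊, e (δ * n) := by
  rw [S]
  apply Finset.sum_congr rfl; intro n _
  rw [Nat.add_zero, eps_mul_self, one_mul]

lemma L_T (Y γ : ℝ) :
    norm (∑ n ∈ Icc 1 ⌊Y⌋₊, e (γ * n))
      ≤ 2 * norm (S Y 1 γ) + norm (S Y 2 γ) + 8 := by
  set M := ⌊Y⌋₊ with hM
  set c : ℂ := e γ with hc
  set F : ℕ → ℂ := fun n =>
    e (γ * n) + (1 + c) * ((eps n : ℂ) * (eps (n + 1) : ℂ) * e (γ * n))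
      + c * ((eps n : ℂ) * (eps (n + 2) : ℂ) * e (γ * n)) with hF
  have habs_c : ‖c‖ = 1 := abs_e γ
  have hFbound : ∀ n, norm (F n) ≤ 4 := by
    intro n
    have h1 : norm (e (γ * n)) = 1 := abs_e _
    have h2 : norm ((1 + c) * ((eps n : ℂ) * (eps (n + 1) : ℂ) * e (γ * n))) ≤ 2 := by
      rw [norm_mul]
      have : norm (1 + c) ≤ 2 := by
        calc norm (1 + c) ≤ ‖(1:ℂ)‖ + ‖c‖ := norm_add_le _ _
          _ = 2 := by rw [habs_c, norm_one]; norm_num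
      calc norm (1 + c) * norm ((eps n : ℂ) * (eps (n + 1) : ℂ) * e (γ * n))
          ≤ 2 * 1 := by
            apply mul_le_mul this (abs_term _ _ _) (norm_nonneg _) (by norm_num)
        _ = 2 := by norm_num
    have h3 : norm (c * ((eps n : ℂ) * (eps (n + 2) : ℂ) * e (γ * n))) ≤ 1 := by
      rw [norm_mul, habs_c, one_mul]
      exact abs_term _ _ _
    calc norm (F n)
        ≤ norm (e (γ * n) + (1 + c) * ((eps n : ℂ) * (eps (n + 1) : ℂ) * e (γ * n)))
          + norm (c * ((eps n : ℂ) * (eps (n + 2) : ℂ) * e (γ * n))) :=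
            norm_add_le _ _
      _ ≤ (norm (e (γ * n))
            + norm ((1 + c) * ((eps n : ℂ) * (eps (n + 1) : ℂ) * e (γ * n)))) +
              norm (c * ((eps n : ℂ) * (eps (n + 2) : ℂ) * e (γ * n))) := by
            have := norm_add_le (e (γ * n))
              ((1 + c) * ((eps n : ℂ) * (eps (n + 1) : ℂ) * e (γ * n)))
            linarith
      _ ≤ 1 + 2 + 1 := by rw [h1]; linarith
      _ = 4 := by norm_num
  have hpair : ∀ m, F (2 * m) + F (2 * m + 1) = 0 := by
    intro m
    have ha : (eps m : ℂ) * (eps m : ℂ) = 1 := eps_mul_self m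
    have e1 : eps (2 * m + 1) = -eps m := eps_two_mul_add_one m
    have e2 : eps (2 * m + 2) = eps (m + 1) := by
      have : 2 * m + 2 = 2 * (m + 1) := by ring
      rw [this, eps_two_mul]
    have e3 : eps (2 * m + 3) = -eps (m + 1) := by
      have : 2 * m + 3 = 2 * (m + 1) + 1 := by ring
      rw [this, eps_two_mul_add_one]
    have hE : e (γ * ((2 * m + 1 : ℕ) : ℝ)) = c * e (γ * ((2 * m : ℕ) : ℝ)) := by
      rw [hc]
      rw [← e_add]
      congr 1
      push_cast; ring
    simp only [hF]
    have harg1 : (2 * m : ℕ) + 1 = 2 * m + 1 := rfl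
    have harg2 : (2 * m : ℕ) + 2 = 2 * m + 2 := rfl
    have harg3 : (2 * m + 1 : ℕ) + 1 = 2 * m + 2 := by ring
    have harg4 : (2 * m + 1 : ℕ) + 2 = 2 * m + 3 := by ring
    rw [harg3, harg4, eps_two_mul, e1, e2, e3, hE]
    generalize e (γ * ((2 * m : ℕ) : ℝ)) = E
    push_cast
    linear_combination (-(1 + c) * E) * ha
  have hFsum : norm (∑ n ∈ Icc 1 M, F n) ≤ 8 := by
    have hIcc : ∑ n ∈ Icc 1 M, F n = ∑ n ∈ range (M + 1), F n - F 0 := by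
      rw [range_succ_eq_insert, Finset.sum_insert (by simp)]
      ring
    rcases Nat.even_or_odd (M + 1) with ⟨a, haa⟩ | ⟨a, haa⟩
    · have : M + 1 = 2 * a := by omega
      rw [hIcc, this, sum_range_two_mul F hpair, zero_sub, norm_neg]
      linarith [hFbound 0]
    · have : M + 1 = 2 * a + 1 := by omega
      rw [hIcc, this, Finset.sum_range_succ, sum_range_two_mul F hpair, zero_add]
      calc norm (F (2 * a) - F 0) ≤ norm (F (2 * a)) + norm (F 0) := by
            rw [sub_eq_add_neg]
            have := norm_add_le (F (2 * a)) (-F 0)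
            rw [norm_neg] at this
            exact this
        _ ≤ 8 := by linarith [hFbound 0, hFbound (2 * a)]
  have hdecomp : ∑ n ∈ Icc 1 M, F n
      = (∑ n ∈ Icc 1 M, e (γ * n)) + (1 + c) * S Y 1 γ + c * S Y 2 γ := by
    rw [S, S, Finset.mul_sum, Finset.mul_sum, ← Finset.sum_add_distrib, ← Finset.sum_add_distrib]
  have hT : (∑ n ∈ Icc 1 M, e (γ * n))
      = ∑ n ∈ Icc 1 M, F n - (1 + c) * S Y 1 γ - c * S Y 2 γ := by
    rw [hdecomp]; ring
  rw [hT]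
  calc norm (∑ n ∈ Icc 1 M, F n - (1 + c) * S Y 1 γ - c * S Y 2 γ)
      ≤ norm (∑ n ∈ Icc 1 M, F n - (1 + c) * S Y 1 γ) + norm (c * S Y 2 γ) := by
        rw [sub_eq_add_neg]
        have := norm_add_le (∑ n ∈ Icc 1 M, F n - (1 + c) * S Y 1 γ) (-(c * S Y 2 γ))
        rw [norm_neg] at this
        exact this
    _ ≤ norm (∑ n ∈ Icc 1 M, F n) + norm ((1 + c) * S Y 1 γ)
          + norm (c * S Y 2 γ) := by
        have := norm_add_le (∑ n ∈ Icc 1 M, F n) (-((1 + c) * S Y 1 γ))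
        rw [norm_neg] at this
        rw [sub_eq_add_neg]
        linarith
    _ ≤ 8 + 2 * norm (S Y 1 γ) + 1 * norm (S Y 2 γ) := by
        have h1 : norm ((1 + c) * S Y 1 γ) ≤ 2 * norm (S Y 1 γ) := by
          rw [norm_mul]
          apply mul_le_mul_of_nonneg_right _ (norm_nonneg _)
          calc norm (1 + c) ≤ ‖(1:ℂ)‖ + ‖c‖ := norm_add_le _ _
            _ = 2 := by rw [habs_c, norm_one]; norm_num
        have h2 : norm (c * S Y 2 γ) = norm (S Y 2 γ) := by
          rw [norm_mul, habs_c, one_mul]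
        linarith [hFsum]
    _ = 2 * norm (S Y 1 γ) + norm (S Y 2 γ) + 8 := by ring

lemma base1 (Y γ : ℝ) :
    norm (S Y 1 γ)
      ≤ 3 * norm (S (Y / 2) 1 (2 * γ)) + norm (S (Y / 2) 2 (2 * γ)) + 10 := by
  have h0 := L_odd Y γ 0
  norm_num at h0
  have h1 : norm (S (Y / 2) 0 (2 * γ))
      ≤ 2 * norm (S (Y / 2) 1 (2 * γ)) + norm (S (Y / 2) 2 (2 * γ)) + 8 := by
    rw [S_zero]
    exact L_T (Y / 2) (2 * γ)
  linarith

lemma base2 (Y γ : ℝ) :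
    norm (S Y 2 γ) ≤ 2 * norm (S (Y / 2) 1 (2 * γ)) + 2 := by
  have h0 := L_even Y γ 1
  norm_num at h0
  exact h0

lemma main_rec : ∀ N : ℕ, ∀ h : ℕ, 2 ^ N ≤ h → h ≤ 2 ^ (N + 1) → ∀ Y γ : ℝ,
    norm (S Y h γ)
      ≤ 3 ^ (N + 1) * (norm (S (Y / 2 ^ (N + 1)) 1 (2 ^ (N + 1) * γ))
          + norm (S (Y / 2 ^ (N + 1)) 2 (2 ^ (N + 1) * γ)) + 4) := by
  intro N
  induction N with
  | zero =>
    intro h h1 h2 Y γ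
    norm_num at h1 h2 ⊢
    set A := norm (S (Y / 2) 1 (2 * γ)) with hA
    set B := norm (S (Y / 2) 2 (2 * γ)) with hB
    have hA0 : 0 ≤ A := norm_nonneg _
    have hB0 : 0 ≤ B := norm_nonneg _
    interval_cases h
    · linarith [base1 Y γ]
    · linarith [base2 Y γ]
  | succ N ih =>
    intro h h1 h2 Y γ
    have hq : 0 < 2 ^ N := Nat.pow_pos (by norm_num)
    have hp1 : (2 : ℕ) ^ (N + 1) = 2 * 2 ^ N := by ring
    have hp2 : (2 : ℕ) ^ (N + 1 + 1) = 4 * 2 ^ N := by ring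
    have e1 : Y / 2 / 2 ^ (N + 1) = Y / 2 ^ (N + 1 + 1) := by
      rw [pow_succ]; ring
    have e2 : 2 ^ (N + 1) * (2 * γ) = 2 ^ (N + 1 + 1) * γ := by
      rw [pow_succ]; ring
    set A := norm (S (Y / 2 ^ (N + 1 + 1)) 1 (2 ^ (N + 1 + 1) * γ)) with hA
    set B := norm (S (Y / 2 ^ (N + 1 + 1)) 2 (2 ^ (N + 1 + 1) * γ)) with hB
    have hA0 : 0 ≤ A := norm_nonneg _
    have hB0 : 0 ≤ B := norm_nonneg _
    have h3 : (1 : ℝ) ≤ 3 ^ (N + 1) := by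
      calc (1 : ℝ) = 1 ^ (N + 1) := (one_pow _).symm
        _ ≤ 3 ^ (N + 1) := pow_le_pow_left₀ (by norm_num) (by norm_num) _
    have hkey : (2 : ℝ) ≤ 3 ^ (N + 1) * (A + B + 4) := by nlinarith
    have hpow3 : (3 : ℝ) ^ (N + 1 + 1) = 3 ^ (N + 1) * 3 := pow_succ 3 (N + 1)
    rcases Nat.even_or_odd h with ⟨k, hk⟩ | ⟨k, hk⟩
    · have hk' : h = 2 * k := by omega
      subst hk'
      have hk1 : 2 ^ N ≤ k := by omega
      have hk2 : k ≤ 2 ^ (N + 1) := by omega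
      have IH := ih k hk1 hk2 (Y / 2) (2 * γ)
      rw [e1, e2] at IH
      have hle := L_even Y γ k
      rw [hpow3]
      rw [← hA, ← hB] at IH
      nlinarith
    · subst hk
      have hk1 : 2 ^ N ≤ k := by omega
      have hk2 : k ≤ 2 ^ (N + 1) := by omega
      have hk1' : 2 ^ N ≤ k + 1 := by omega
      have hk2' : k + 1 ≤ 2 ^ (N + 1) := by omega
      have IH1 := ih k hk1 hk2 (Y / 2) (2 * γ)
      have IH2 := ih (k + 1) hk1' hk2' (Y / 2) (2 * γ)
      rw [e1, e2] at IH1 IH2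
      rw [← hA, ← hB] at IH1 IH2
      have hle := L_odd Y γ k
      rw [hpow3]
      nlinarith

theorem lemma_two : ∃ C : ℝ, 0 < C ∧ ∀ (β X : ℝ) (h N : ℕ),
    2 < X → 2 < h → 2 ^ N ≤ h → h < 2 ^ (N + 1) →
    ‖S X h β‖ ≤
      C * ((h : ℝ) ^ (Real.logb 2 3) * ‖S (X / 2 ^ (N + 1)) 1 (2 ^ (N + 1) * β)‖ +
           (h : ℝ) ^ (Real.logb 2 3) * ‖S (X / 2 ^ (N + 1)) 2 (2 ^ (N + 1) * β)‖ +
           (h : ℝ) ^ (Real.logb 2 3)) := by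
  refine ⟨12, by norm_num, ?_⟩
  intro β X h N _ hh2 hN1 hN2
  have hmain := main_rec N h hN1 (le_of_lt hN2) X β
  set A := norm (S (X / 2 ^ (N + 1)) 1 (2 ^ (N + 1) * β)) with hA
  set B := norm (S (X / 2 ^ (N + 1)) 2 (2 ^ (N + 1) * β)) with hB
  have hA0 : 0 ≤ A := norm_nonneg _
  have hB0 : 0 ≤ B := norm_nonneg _
  set α : ℝ := Real.logb 2 3 with hα
  have hα0 : 0 ≤ α := Real.logb_nonneg (by norm_num) (by norm_num)
  have hcalc : ((2 : ℝ) ^ N) ^ α = 3 ^ N := by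
    rw [hα, ← Real.rpow_natCast 2 N, ← Real.rpow_mul (by norm_num : (0:ℝ) ≤ 2),
      mul_comm ((N : ℕ) : ℝ) (Real.logb 2 3),
      Real.rpow_mul (by norm_num : (0:ℝ) ≤ 2),
      Real.rpow_logb (by norm_num) (by norm_num) (by norm_num), Real.rpow_natCast]
  have h2N : ((2 : ℝ) ^ N) ≤ (h : ℝ) := by exact_mod_cast hN1
  have hpowle : (3 : ℝ) ^ N ≤ (h : ℝ) ^ α := by
    rw [← hcalc]
    exact Real.rpow_le_rpow (by positivity) h2N hα0
  have hone : (1 : ℝ) ≤ (h : ℝ) ^ α := by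
    rw [show (1:ℝ) = 1 ^ α from (Real.one_rpow α).symm]
    exact Real.rpow_le_rpow (by norm_num) (by exact_mod_cast Nat.one_le_iff_ne_zero.mpr (by omega)) hα0
  have hαnn : 0 ≤ (h : ℝ) ^ α := by positivity
  have hstep : (3:ℝ) ^ (N + 1) * (A + B + 4) ≤ 3 * (h : ℝ) ^ α * (A + B + 4) := by
    have : (3:ℝ) ^ (N + 1) = 3 * 3 ^ N := by ring
    rw [this]
    have hfac : (0:ℝ) ≤ A + B + 4 := by linarith
    nlinarith
  calc norm (S X h β) ≤ (3:ℝ) ^ (N + 1) * (A + B + 4) := hmain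
    _ ≤ 3 * (h : ℝ) ^ α * (A + B + 4) := hstep
    _ ≤ 12 * ((h : ℝ) ^ α * A + (h : ℝ) ^ α * B + (h : ℝ) ^ α) := by nlinarith
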